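/- Let n, a, b be natural numbers with b even, b ≥ 2, and b/2 ≤ a ≤ n − b/2. Then C(n−a, b/2)·C(a, b/2) ≤ (1/(π·b)) · (2e·√(a·n) / b)^b, where e is Euler's number and π is pi. Equivalently, p_D'(a,b) := C(n−a, b/2)·C(a, b/2)/C(n,a) ≤ (2e√(an)/b)^b / (π·b·C(n,a)). -/

import Mathlib

open Real

/-- Stirling lower bound for the factorial: `√(2πk)·(k/e)^k ≤ k!` for `k ≥ 1`. -/
lemma factorial_stirling_lower (k : ℕ) (hk : 1 ≤ k) :
    Real.sqrt (2 * Real.pi * k) * ((k : ℝ) / Real.exp 1) ^ k ≤ (k.factorial : ℝ) := by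
  have hmono : Antitone (Stirling.stirlingSeq ∘ Nat.succ) := Stirling.stirlingSeq'_antitone
  have hlim : Filter.Tendsto (Stirling.stirlingSeq ∘ Nat.succ) Filter.atTop (nhds (Real.sqrt π)) :=
    (Stirling.tendsto_stirlingSeq_sqrt_pi.comp (Filter.tendsto_add_atTop_nat 1))
  obtain ⟨m, rfl⟩ : ∃ m, k = m + 1 := ⟨k - 1, (Nat.succ_pred_eq_of_pos hk).symm⟩
  have hge : Real.sqrt π ≤ Stirling.stirlingSeq (m + 1) := hmono.le_of_tendsto hlim m
  rw [Stirling.stirlingSeq] at hge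
  have hKpos : (0 : ℝ) < ((m + 1 : ℕ) : ℝ) := by positivity
  have hden : (0 : ℝ) < Real.sqrt (2 * ((m + 1 : ℕ) : ℝ)) * (((m + 1 : ℕ) : ℝ) / Real.exp 1) ^ (m + 1) := by positivity
  rw [le_div_iff₀ hden] at hge
  calc Real.sqrt (2 * π * ((m + 1 : ℕ) : ℝ)) * (((m + 1 : ℕ) : ℝ) / Real.exp 1) ^ (m + 1)
      = Real.sqrt π * (Real.sqrt (2 * ((m + 1 : ℕ) : ℝ)) * (((m + 1 : ℕ) : ℝ) / Real.exp 1) ^ (m + 1)) := by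
        rw [show 2 * π * ((m + 1 : ℕ) : ℝ) = π * (2 * ((m + 1 : ℕ) : ℝ)) by ring, Real.sqrt_mul Real.pi_pos.le]
        ring
    _ ≤ (Nat.factorial (m + 1) : ℝ) := hge

/-- For even `b ≥ 2` with `b/2 ≤ a ≤ n − b/2`:
`C(n−a, b/2)·C(a, b/2) ≤ (1/(π·b))·(2e·√(a·n)/b)^b`. -/
theorem choose_prod_le_exp_bound (n a b : ℕ) (hb : Even b) (hb2 : 2 ≤ b)
    (hba : b / 2 ≤ a) (han : a ≤ n - b / 2) :
    ((n - a).choose (b / 2) * a.choose (b / 2) : ℝ) ≤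
      (1 / (Real.pi * b)) * (2 * Real.exp 1 * Real.sqrt ((a : ℝ) * n) / b) ^ b := by
  set k := b / 2 with hkdef
  have hb' : b = 2 * k := by
    obtain ⟨c, hc⟩ := hb
    omega
  have hk1 : 1 ≤ k := by omega
  have hKpos : (0 : ℝ) < k := by positivity
  have hepos : (0 : ℝ) < Real.exp 1 := Real.exp_pos 1
  -- factorial lower bound
  have hfact : Real.sqrt (2 * π * k) * ((k : ℝ) / Real.exp 1) ^ k ≤ (k.factorial : ℝ) :=
    factorial_stirling_lower k hk1
  have hfactpos : (0 : ℝ) < (k.factorial : ℝ) := by exact_mod_cast k.factorial_pos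
  -- square it
  have hsq : 2 * π * k * (((k : ℝ) / Real.exp 1) ^ k) ^ 2 ≤ ((k.factorial : ℝ)) ^ 2 := by
    have h1 : (0 : ℝ) ≤ Real.sqrt (2 * π * k) * ((k : ℝ) / Real.exp 1) ^ k := by positivity
    have := mul_self_le_mul_self h1 hfact
    calc 2 * π * k * (((k : ℝ) / Real.exp 1) ^ k) ^ 2
        = (Real.sqrt (2 * π * k) * ((k : ℝ) / Real.exp 1) ^ k) *
          (Real.sqrt (2 * π * k) * ((k : ℝ) / Real.exp 1) ^ k) := by
          rw [show ∀ x y : ℝ, (x * y) * (x * y) = (x * x) * y ^ 2 by intros; ring]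
          rw [Real.mul_self_sqrt (by positivity)]
      _ ≤ (k.factorial : ℝ) * (k.factorial : ℝ) := this
      _ = ((k.factorial : ℝ)) ^ 2 := (sq _).symm
  -- choose bounds
  have h1 : ((n - a).choose k : ℝ) ≤ ((n : ℝ)) ^ k / k.factorial := by
    refine (Nat.choose_le_pow_div k (n - a)).trans ?_
    gcongr
    exact_mod_cast Nat.cast_le.mpr (Nat.sub_le n a)
  have h2 : (a.choose k : ℝ) ≤ ((a : ℝ)) ^ k / k.factorial :=
    Nat.choose_le_pow_div k a
  have hprod : ((n - a).choose k * a.choose k : ℝ) ≤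
      (n : ℝ) ^ k * (a : ℝ) ^ k / ((k.factorial : ℝ) ^ 2) := by
    have h := mul_le_mul h1 h2 (by positivity) (by positivity)
    refine h.trans_eq ?_
    ring
  refine hprod.trans ?_
  -- now compare denominators
  have hdenpos : (0 : ℝ) < 2 * π * k * (((k : ℝ) / Real.exp 1) ^ k) ^ 2 := by positivity
  have hstep : (n : ℝ) ^ k * (a : ℝ) ^ k / ((k.factorial : ℝ) ^ 2) ≤
      (n : ℝ) ^ k * (a : ℝ) ^ k / (2 * π * k * (((k : ℝ) / Real.exp 1) ^ k) ^ 2) := by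
    gcongr
    all_goals exact hsq
  refine hstep.trans_eq ?_
  -- algebraic identity
  have hsqrt : Real.sqrt ((a : ℝ) * n) ^ 2 = (a : ℝ) * n := Real.sq_sqrt (by positivity)
  have hkne : (k : ℝ) ≠ 0 := hKpos.ne'
  have hene : Real.exp 1 ≠ 0 := hepos.ne'
  have hpine : π ≠ 0 := Real.pi_ne_zero
  have h2k : ((2 * k : ℕ) : ℝ) = 2 * (k : ℝ) := by push_cast; ring
  rw [hb', h2k]
  have key : (2 * Real.exp 1 * Real.sqrt ((a : ℝ) * n) / (2 * (k : ℝ))) ^ (2 * k)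
      = ((Real.exp 1 ^ 2 * ((a : ℝ) * n)) / (k : ℝ) ^ 2) ^ k := by
    rw [pow_mul]
    congr 1
    rw [div_pow, mul_pow, mul_pow, hsqrt]
    field_simp
  rw [key, div_pow (k : ℝ) (Real.exp 1) k]
  field_simp
  have hE : Real.exp (k : ℝ) ^ 2 = Real.exp 2 ^ k := by
    rw [← Real.exp_nat_mul, ← Real.exp_nat_mul]
    congr 1
    push_cast
    ring
  rw [div_pow, ← mul_div_assoc, eq_div_iff (pow_ne_zero _ (pow_ne_zero _ hkne))]
  ring
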